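/- For n ≥ 1, the map w ↦ π^c, where π = (w_2 - 1)(w_3 - 1)···(w_{2n} - 1) and π^c(i) = 2n - π(i), is a bijection from {w ∈ A_{2n}(4312) : w_1 = 1} onto A_{2n-1}(1243). -/

import Mathlib

/-- `u` is a permutation of `{1,...,m}`, given as the word `u 0, u 1, ..., u (m-1)`. -/
def IsPermOn (m : ℕ) (u : Fin m → ℕ) : Prop :=
  Function.Injective u ∧ ∀ i, u i ∈ Finset.Icc 1 m

/-- up-down (alternating): u 0 < u 1 > u 2 < u 3 > ... -/
def UpDown (m : ℕ) (u : Fin m → ℕ) : Prop :=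
  ∀ i : ℕ, ∀ h : i + 1 < m,
    (i % 2 = 0 → u ⟨i, by omega⟩ < u ⟨i + 1, h⟩) ∧
    (i % 2 = 1 → u ⟨i + 1, h⟩ < u ⟨i, by omega⟩)

/-- down-up: u 0 > u 1 < u 2 > u 3 < ... -/
def DownUp (m : ℕ) (u : Fin m → ℕ) : Prop :=
  ∀ i : ℕ, ∀ h : i + 1 < m,
    (i % 2 = 0 → u ⟨i + 1, h⟩ < u ⟨i, by omega⟩) ∧
    (i % 2 = 1 → u ⟨i, by omega⟩ < u ⟨i + 1, h⟩)

/-- `u` contains the pattern `σ`. -/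
def Contains {m k : ℕ} (u : Fin m → ℕ) (σ : Fin k → ℕ) : Prop :=
  ∃ g : Fin k → Fin m, StrictMono g ∧ ∀ a b : Fin k, u (g a) < u (g b) ↔ σ a < σ b

def Avoids {m k : ℕ} (u : Fin m → ℕ) (σ : Fin k → ℕ) : Prop := ¬ Contains u σ

/-- The set `A_m(σ)` of σ-avoiding up-down alternating permutations of `{1,...,m}`. -/
def AvoidSet (m : ℕ) {k : ℕ} (σ : Fin k → ℕ) : Set (Fin m → ℕ) :=
  {u | IsPermOn m u ∧ UpDown m u ∧ Avoids u σ}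

def p1234 : Fin 4 → ℕ := ![1, 2, 3, 4]
def p1243 : Fin 4 → ℕ := ![1, 2, 4, 3]
def p2143 : Fin 4 → ℕ := ![2, 1, 4, 3]
def p4312 : Fin 4 → ℕ := ![4, 3, 1, 2]
def p3412 : Fin 4 → ℕ := ![3, 4, 1, 2]

/-- `f(u)`: max over 0 and the smaller entries of 21-patterns of `u`. -/
noncomputable def fval {m : ℕ} (u : Fin m → ℕ) : ℕ :=
  sSup ({0} ∪ {x | ∃ i j : Fin m, i < j ∧ u j < u i ∧ x = u j})

/-- `e(u)`: max over 0 and the smallest entries of 132-patterns of `u`. -/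
noncomputable def eval' {m : ℕ} (u : Fin m → ℕ) : ℕ :=
  sSup ({0} ∪ {x | ∃ i j k : Fin m, i < j ∧ j < k ∧ u i < u k ∧ u k < u j ∧ x = u i})

/-- `g(u)`: min over m+1 and the largest entries of 312-patterns of `u`. -/
noncomputable def gval {m : ℕ} (u : Fin m → ℕ) : ℕ :=
  sInf ({m + 1} ∪ {x | ∃ i j k : Fin m, i < j ∧ j < k ∧ u j < u k ∧ u k < u i ∧ x = u i})

/-- `h(u)`: min over m+1 and the larger entries of 12-patterns of `u`. -/
noncomputable def hval {m : ℕ} (u : Fin m → ℕ) : ℕ :=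
  sInf ({m + 1} ∪ {x | ∃ i j : Fin m, i < j ∧ u i < u j ∧ x = u j})

/-- the operation `v ↦ u`: prepend `v`, increasing every entry `≥ v` by 1. -/
def ins {m : ℕ} (v : ℕ) (u : Fin m → ℕ) : Fin (m + 1) → ℕ :=
  Fin.cases v (fun j => if u j < v then u j else u j + 1)

/-- standardization of a word with distinct entries. -/
def stWord {k : ℕ} (r : Fin k → ℕ) : Fin k → ℕ :=
  fun j => (Finset.univ.filter (fun i => r i ≤ r j)).card


lemma pat_compl : ∀ a b : Fin 4, p4312 a < p4312 b ↔ p1243 b < p1243 a := by decide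

def wb (n : ℕ) (u : Fin (2*n-1) → ℕ) : Fin (2*n) → ℕ := fun i =>
  if (i:ℕ) = 0 then 1 else 2*n + 1 - u ⟨(i:ℕ) - 1, by have := i.isLt; omega⟩

lemma wb0 (n : ℕ) (u : Fin (2*n-1) → ℕ) (h : 0 < 2*n) : wb n u ⟨0, h⟩ = 1 := by
  simp [wb]

lemma wbs (n : ℕ) (u : Fin (2*n-1) → ℕ) (k : ℕ) (hk : k + 1 < 2*n) (hk' : k < 2*n-1) :
    wb n u ⟨k+1, hk⟩ = 2*n + 1 - u ⟨k, hk'⟩ := by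
  simp [wb]

lemma wbpos (n : ℕ) (u : Fin (2*n-1) → ℕ) (hu : ∀ j, 1 ≤ u j ∧ u j ≤ 2*n - 1)
    (i : Fin (2*n)) : 1 ≤ wb n u i := by
  simp only [wb]
  split_ifs with h
  · omega
  · have := hu ⟨(i:ℕ)-1, by have := i.isLt; omega⟩
    omega

set_option maxHeartbeats 1000000 in
lemma lmaps (n : ℕ) (hn : 1 ≤ n) :
    Set.MapsTo
      (fun (w : Fin (2 * n) → ℕ) => fun (i : Fin (2 * n - 1)) =>
        2 * n - (w ⟨(i : ℕ) + 1, by have := i.isLt; clear hn; omega⟩ - 1))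
      {w | w ∈ AvoidSet (2 * n) p4312 ∧ w ⟨0, Nat.mul_pos two_pos hn⟩ = 1}
      (AvoidSet (2 * n - 1) p1243) := by
    rintro w ⟨⟨⟨hinj, hmem⟩, hud, hav⟩, hw0⟩
    have hbound : ∀ i : Fin (2*n), (i:ℕ) ≠ 0 → 2 ≤ w i ∧ w i ≤ 2*n := by
      intro i hi
      have h1 := hmem i
      rw [Finset.mem_Icc] at h1
      refine ⟨?_, h1.2⟩
      rcases Nat.lt_or_ge (w i) 2 with h | h
      · exfalso
        have hwi : w i = 1 := by omega
        have h2 : i = ⟨0, by omega⟩ := hinj (hwi.trans hw0.symm)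
        apply hi
        rw [h2]
      · exact h
    refine ⟨⟨?_, ?_⟩, ?_, ?_⟩
    · -- injective
      intro i j hij
      simp only at hij
      have hi := hbound ⟨(i:ℕ)+1, by have := i.isLt; omega⟩ (by simp)
      have hj := hbound ⟨(j:ℕ)+1, by have := j.isLt; omega⟩ (by simp)
      have hw : w ⟨(i:ℕ)+1, by have := i.isLt; omega⟩
          = w ⟨(j:ℕ)+1, by have := j.isLt; omega⟩ := by omega
      have h3 := hinj hw
      have h4 : (i:ℕ)+1 = (j:ℕ)+1 := congrArg Fin.val h3
      exact Fin.ext (by omega)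
    · -- range
      intro i
      have hi := hbound ⟨(i:ℕ)+1, by have := i.isLt; omega⟩ (by simp)
      rw [Finset.mem_Icc]
      have hlt := i.isLt
      constructor <;> simp only <;> omega
    · -- UpDown
      intro i h
      have h1 := hud (i+1) (by omega)
      have hi := hbound ⟨i+1, by omega⟩ (by simp)
      have hj := hbound ⟨i+1+1, by omega⟩ (by simp)
      constructor
      · intro hpar
        have := h1.2 (by omega)
        simp only
        omega
      · intro hpar
        have := h1.1 (by omega)
        simp only
        omega
    · -- avoids p1243
      rintro ⟨g, hg, hpat⟩
      apply hav
      refine ⟨fun a => ⟨((g a : ℕ)) + 1, by have := (g a).isLt; omega⟩, ?_, ?_⟩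
      · intro a b hab
        have := hg hab
        rw [Fin.lt_def] at this ⊢
        simpa using this
      · intro a b
        beta_reduce
        have h := hpat b a
        simp only at h
        have Ha := hbound ⟨(g a : ℕ)+1, by have := (g a).isLt; omega⟩ (by simp)
        have Hb := hbound ⟨(g b : ℕ)+1, by have := (g b).isLt; omega⟩ (by simp)
        rw [pat_compl, ← h]
        constructor <;> intro <;> omega

set_option maxHeartbeats 1000000 in
lemma linj (n : ℕ) (hn : 1 ≤ n) :
    Set.InjOn
      (fun (w : Fin (2 * n) → ℕ) => fun (i : Fin (2 * n - 1)) =>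
        2 * n - (w ⟨(i : ℕ) + 1, by have := i.isLt; clear hn; omega⟩ - 1))
      {w | w ∈ AvoidSet (2 * n) p4312 ∧ w ⟨0, Nat.mul_pos two_pos hn⟩ = 1} := by
    rintro w ⟨⟨⟨hinj, hmem⟩, -, -⟩, hw0⟩ w' ⟨⟨⟨hinj', hmem'⟩, -, -⟩, hw0'⟩ heq
    funext i
    rcases Nat.eq_zero_or_pos (i : ℕ) with h0 | hpos
    · have : i = ⟨0, by omega⟩ := Fin.ext h0
      rw [this, hw0, hw0']
    · have hlt := i.isLt
      have h1 := congrFun heq ⟨(i:ℕ) - 1, by omega⟩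
      simp only at h1
      have hi1 : ((i:ℕ) - 1) + 1 = (i:ℕ) := by omega
      have hieq : (⟨((i:ℕ)-1)+1, by omega⟩ : Fin (2*n)) = i := Fin.ext hi1
      rw [hieq] at h1
      have b1 := hmem i; have b2 := hmem' i
      rw [Finset.mem_Icc] at b1 b2
      have hne : w i ≠ 1 := by
        intro h
        have h2 : i = ⟨0, by omega⟩ := hinj (h.trans hw0.symm)
        rw [h2] at hpos; simp at hpos
      have hne' : w' i ≠ 1 := by
        intro h
        have h2 : i = ⟨0, by omega⟩ := hinj' (h.trans hw0'.symm)
        rw [h2] at hpos; simp at hpos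
      omega

set_option maxHeartbeats 1000000 in
lemma wbmem (n : ℕ) (hn : 1 ≤ n) (u : Fin (2*n-1) → ℕ)
    (hu : u ∈ AvoidSet (2 * n - 1) p1243) :
    wb n u ∈ {w | w ∈ AvoidSet (2 * n) p4312 ∧ w ⟨0, Nat.mul_pos two_pos hn⟩ = 1} := by
  obtain ⟨⟨huinj, humem⟩, huud, huav⟩ := hu
  have hub : ∀ j : Fin (2*n-1), 1 ≤ u j ∧ u j ≤ 2*n - 1 := by
    intro j
    have := humem j
    rwa [Finset.mem_Icc] at this
  have hw0 : wb n u ⟨0, by omega⟩ = 1 := wb0 n u (by omega)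
  refine ⟨⟨⟨?_, ?_⟩, ?_, ?_⟩, hw0⟩
  · -- injective
    intro i j hij
    rcases Nat.eq_zero_or_pos (i:ℕ) with hi0 | hi1 <;>
      rcases Nat.eq_zero_or_pos (j:ℕ) with hj0 | hj1 <;>
      simp only [wb] at hij
    · exact Fin.ext (by omega)
    · exfalso
      rw [if_pos hi0, if_neg (by omega : ¬ (j:ℕ) = 0)] at hij
      have := hub ⟨(j:ℕ)-1, by have := j.isLt; omega⟩
      omega
    · exfalso
      rw [if_pos hj0, if_neg (by omega : ¬ (i:ℕ) = 0)] at hij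
      have := hub ⟨(i:ℕ)-1, by have := i.isLt; omega⟩
      omega
    · rw [if_neg (by omega : ¬ (i:ℕ) = 0), if_neg (by omega : ¬ (j:ℕ) = 0)] at hij
      have b1 := hub ⟨(i:ℕ)-1, by have := i.isLt; omega⟩
      have b2 := hub ⟨(j:ℕ)-1, by have := j.isLt; omega⟩
      have h5 : u ⟨(i:ℕ)-1, by have := i.isLt; omega⟩
          = u ⟨(j:ℕ)-1, by have := j.isLt; omega⟩ := by omega
      have h3 := huinj h5
      have h4 : (i:ℕ) - 1 = (j:ℕ) - 1 := congrArg Fin.val h3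
      exact Fin.ext (by omega)
  · -- range
    intro i
    rw [Finset.mem_Icc]
    simp only [wb]
    split_ifs with h
    · omega
    · have := hub ⟨(i:ℕ)-1, by have := i.isLt; omega⟩
      omega
  · -- UpDown
    intro i h
    rcases Nat.eq_zero_or_pos i with hi0 | hi1
    · subst hi0
      have hv0 : wb n u ⟨0, by omega⟩ = 1 := hw0
      have hv1 : wb n u ⟨0+1, h⟩ = 2*n + 1 - u ⟨0, by omega⟩ :=
        wbs n u 0 h (by omega)
      have := hub ⟨0, by omega⟩
      constructor
      · intro _; omega
      · intro hc; omega
    · obtain ⟨k, rfl⟩ : ∃ k, i = k + 1 := ⟨i - 1, by omega⟩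
      have hv1 : wb n u ⟨k+1, by omega⟩ = 2*n + 1 - u ⟨k, by omega⟩ :=
        wbs n u k (by omega) (by omega)
      have hv2 : wb n u ⟨k+1+1, h⟩ = 2*n + 1 - u ⟨k+1, by omega⟩ :=
        wbs n u (k+1) h (by omega)
      have hu := huud k (by omega)
      have b1 := hub ⟨k, by omega⟩
      have b2 := hub ⟨k+1, by omega⟩
      constructor
      · intro hpar
        have := hu.2 (by omega)
        omega
      · intro hpar
        have := hu.1 (by omega)
        omega
  · -- avoids p4312
    rintro ⟨g, hg, hpat⟩
    have hg0 : ∀ a : Fin 4, (g a : ℕ) ≠ 0 := by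
      intro a ha
      have ha0 : a = 0 := by
        by_contra hc
        have h0a : (0 : Fin 4) < a := by
          rw [Fin.lt_def]
          rcases Nat.eq_zero_or_pos (a:ℕ) with h | h
          · exact absurd (Fin.ext h) hc
          · simpa using h
        have := hg h0a
        rw [Fin.lt_def] at this
        omega
      subst ha0
      have h02 := (hpat 2 0).mpr (by decide)
      have hge := wbpos n u hub (g 2)
      have hz : wb n u (g 0) = 1 := by
        simp only [wb]
        rw [if_pos ha]
      omega
    apply huav
    refine ⟨fun a => ⟨(g a : ℕ) - 1, by have := (g a).isLt; have := hg0 a; omega⟩, ?_, ?_⟩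
    · intro a b hab
      have h1 := hg hab
      rw [Fin.lt_def] at h1 ⊢
      have h2 := hg0 a
      simp only
      omega
    · intro a b
      beta_reduce
      have h := hpat b a
      have ea : wb n u (g a)
          = 2*n + 1 - u ⟨(g a:ℕ)-1, by have := (g a).isLt; have := hg0 a; omega⟩ := by
        simp only [wb]
        rw [if_neg (hg0 a)]
      have eb : wb n u (g b)
          = 2*n + 1 - u ⟨(g b:ℕ)-1, by have := (g b).isLt; have := hg0 b; omega⟩ := by
        simp only [wb]
        rw [if_neg (hg0 b)]
      rw [ea, eb] at h
      have Ha := hub ⟨(g a:ℕ)-1, by have := (g a).isLt; have := hg0 a; omega⟩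
      have Hb := hub ⟨(g b:ℕ)-1, by have := (g b).isLt; have := hg0 b; omega⟩
      rw [← pat_compl, ← h]
      constructor <;> intro <;> omega

set_option maxHeartbeats 1000000 in
lemma lsurj (n : ℕ) (hn : 1 ≤ n) :
    Set.SurjOn
      (fun (w : Fin (2 * n) → ℕ) => fun (i : Fin (2 * n - 1)) =>
        2 * n - (w ⟨(i : ℕ) + 1, by have := i.isLt; clear hn; omega⟩ - 1))
      {w | w ∈ AvoidSet (2 * n) p4312 ∧ w ⟨0, Nat.mul_pos two_pos hn⟩ = 1}
      (AvoidSet (2 * n - 1) p1243) := by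
  intro u hu
  have hub : ∀ j : Fin (2*n-1), 1 ≤ u j ∧ u j ≤ 2*n - 1 := by
    intro j
    have := hu.1.2 j
    rwa [Finset.mem_Icc] at this
  refine ⟨wb n u, wbmem n hn u hu, ?_⟩
  funext i
  simp only
  have hlt := i.isLt
  have hv : wb n u ⟨(i:ℕ)+1, by omega⟩ = 2*n + 1 - u ⟨(i:ℕ), by omega⟩ :=
    wbs n u (i:ℕ) (by omega) (by omega)
  have hieq : (⟨(i:ℕ), by omega⟩ : Fin (2*n-1)) = i := Fin.ext rfl
  rw [hv, hieq]
  have := hub i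
  omega

theorem stmt19 (n : ℕ) (hn : 1 ≤ n) :
    Set.BijOn
      (fun (w : Fin (2 * n) → ℕ) => fun (i : Fin (2 * n - 1)) =>
        2 * n - (w ⟨(i : ℕ) + 1, by have := i.isLt; omega⟩ - 1))
      {w | w ∈ AvoidSet (2 * n) p4312 ∧ w ⟨0, by omega⟩ = 1}
      (AvoidSet (2 * n - 1) p1243) :=
  ⟨lmaps n hn, linj n hn, lsurj n hn⟩
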